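/- For every permutation π of length n, P^{n-1}(π) is the identity permutation 1 2 ⋯ n, where P is the pop-stack sorting operator. -/

import Mathlib

/-- Flip operator `F`: simultaneously reverse every (automatically pairwise disjoint)
`10` factor, i.e. every zero immediately preceded by a one swaps with that one.
Here `false` plays the role of `0` and `true` of `1`. -/
def flipWord : List Bool → List Bool
  | true :: false :: rest => false :: true :: flipWord rest
  | a :: rest => a :: flipWord rest
  | [] => []

/-- The positions (indices) of the zeros (`false`) of a binary word, left to right. -/
def zeroPositions (w : List Bool) : List ℕ :=
  (List.range w.length).filter (fun i => w.getD i true = false)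

/-- `u ⊴ v` : for every `i`, the `i`-th zero of `u` occurs at a position at most
that of the `i`-th zero of `v`. -/
def WLE (u v : List Bool) : Prop :=
  List.Forall₂ (· ≤ ·) (zeroPositions u) (zeroPositions v)

/-- One tumble move: choose pairwise non-overlapping factors of the form `1^+0^+`
covering every `10` factor, and reverse each in place. `Tumble w u` means `u ∈ T(w)`. -/
inductive Tumble : List Bool → List Bool → Prop
  | nil : Tumble [] []
  | zero {w u} : Tumble w u → Tumble (false :: w) (false :: u)
  | one {w u} : Tumble w u → w.head? ≠ some false → Tumble (true :: w) (true :: u)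
  | block {w u} (a b : ℕ) : 0 < a → 0 < b → Tumble w u →
      Tumble (List.replicate a true ++ List.replicate b false ++ w)
             (List.replicate b false ++ List.replicate a true ++ u)

/-- `TumbleN t w u` : `u` is reachable from `w` by exactly `t` tumble moves. -/
def TumbleN : ℕ → List Bool → List Bool → Prop
  | 0 => Eq
  | t + 1 => fun w u => ∃ v, TumbleN t w v ∧ Tumble v u

/-- The 0/1 projection at threshold `k`: the `i`-th letter is `0` iff `w(i) < k`. -/
def proj (k : ℕ) (w : List ℕ) : List Bool := w.map (fun x => decide (k ≤ x))

/-- Pop-stack operator `P`: partition into maximal strictly decreasing runs and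
reverse each run in place. -/
def popStack (w : List ℕ) : List ℕ :=
  ((w.splitBy (fun a b => decide (b < a))).map List.reverse).flatten


/-- positions of `false` in a Bool word, starting at offset `s`. -/
def zp : List Bool → ℕ → List ℕ
  | [], _ => []
  | false :: w, s => s :: zp w (s+1)
  | true :: w, s => zp w (s+1)

lemma zp_append : ∀ (u v : List Bool) (s : ℕ),
    zp (u ++ v) s = zp u s ++ zp v (s + u.length)
  | [], v, s => by simp [zp]
  | true :: u, v, s => by
    simp [zp, zp_append u v (s+1)]
    ring_nf
  | false :: u, v, s => by
    simp [zp, zp_append u v (s+1)]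
    ring_nf

lemma zp_replicate_true (a s : ℕ) : zp (List.replicate a true) s = [] := by
  induction a generalizing s with
  | zero => rfl
  | succ a ih => simpa [List.replicate_succ, zp] using ih (s+1)

lemma zp_replicate_false (b s : ℕ) : zp (List.replicate b false) s = List.range' s b := by
  induction b generalizing s with
  | zero => rfl
  | succ b ih => simp [List.replicate_succ, zp, List.range'_succ, ih (s+1)]

lemma zp_length : ∀ (w : List Bool) (s : ℕ), (zp w s).length = w.count false
  | [], _ => rfl
  | true :: w, s => by simp [zp, zp_length w (s+1), List.count_cons]
  | false :: w, s => by simp [zp, zp_length w (s+1), List.count_cons]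

lemma zp_lower : ∀ (w : List Bool) (s i : ℕ) (h : i < (zp w s).length),
    s + i ≤ (zp w s)[i]
  | [], s, i, h => by simp [zp] at h
  | true :: w, s, i, h => by
    have := zp_lower w (s+1) i (by simpa [zp] using h)
    simpa [zp] using by omega
  | false :: w, s, 0, h => by simp [zp]
  | false :: w, s, i+1, h => by
    have := zp_lower w (s+1) i (by simpa [zp] using h)
    simp only [zp, List.getElem_cons_succ]
    omega

lemma zp_upper : ∀ (w : List Bool) (s i : ℕ) (h : i < (zp w s).length),
    (zp w s)[i] + (zp w s).length ≤ s + w.length + i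
  | [], s, i, h => by simp [zp] at h
  | true :: w, s, i, h => by
    have := zp_upper w (s+1) i (by simpa [zp] using h)
    simp only [zp, List.length_cons] at *
    omega
  | false :: w, s, 0, h => by
    have h2 : (zp w (s+1)).length ≤ w.length := by
      rw [zp_length]; exact List.count_le_length
    simp only [zp, List.getElem_cons_zero, List.length_cons]
    omega
  | false :: w, s, i+1, h => by
    have := zp_upper w (s+1) i (by simpa [zp] using h)
    simp only [zp, List.getElem_cons_succ, List.length_cons] at *
    omega

lemma zp_mem : ∀ (w : List Bool) (s m : ℕ),
    m ∈ zp w s ↔ ∃ i, ∃ h : i < w.length, m = s + i ∧ w[i] = false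
  | [], s, m => by simp [zp]
  | true :: w, s, m => by
    rw [show zp (true :: w) s = zp w (s+1) from rfl, zp_mem w (s+1) m]
    constructor
    · rintro ⟨i, h, rfl, hw⟩
      exact ⟨i+1, by simpa using h, by omega, by simpa using hw⟩
    · rintro ⟨i, h, rfl, hw⟩
      match i, h, hw with
      | 0, h, hw => simp at hw
      | i+1, h, hw =>
        exact ⟨i, by simpa using h, by omega, by simpa using hw⟩
  | false :: w, s, m => by
    rw [show zp (false :: w) s = s :: zp w (s+1) from rfl]
    simp only [List.mem_cons, zp_mem w (s+1) m]
    constructor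
    · rintro (rfl | ⟨i, h, rfl, hw⟩)
      · exact ⟨0, by simp, by omega, by simp⟩
      · exact ⟨i+1, by simpa using h, by omega, by simpa using hw⟩
    · rintro ⟨i, h, rfl, hw⟩
      match i, h, hw with
      | 0, h, hw => left; omega
      | i+1, h, hw =>
        right; exact ⟨i, by simpa using h, by omega, by simpa using hw⟩

/-- One-step domination relation between zero-position lists. -/
inductive ZRel : ℕ → List ℕ → List ℕ → Prop
  | nil (c : ℕ) : ZRel c [] []
  | cons {c q p : ℕ} {qs ps : List ℕ} :
      q ≤ max c (p - 1) → ZRel (p+1) qs ps → ZRel c (q :: qs) (p :: ps)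

lemma relBlock (a : ℕ) : ∀ (b s c : ℕ) (Q P : List ℕ),
    s ≤ max c (s + a - 1) → ZRel (s + a + b + 1) Q P →
    ZRel c (List.range' s (b+1) ++ Q) (List.range' (s+a) (b+1) ++ P) := by
  intro b
  induction b with
  | zero =>
    intro s c Q P h1 h2
    simpa [List.range'_succ] using ZRel.cons h1 h2
  | succ b ih =>
    intro s c Q P h1 h2
    rw [List.range'_succ, List.range'_succ (s := s+a)]
    refine ZRel.cons (by omega) ?_
    have := ih (s+1) (s+a+1) Q P (by omega) (by convert h2 using 2; omega)
    rw [show s+1+a = s+a+1 by omega] at this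
    simpa using this

lemma indStep {M t : ℕ} : ∀ {c : ℕ} {q p : List ℕ}, ZRel c q p →
    ∀ {j : ℕ}, (∀ i (h : i < p.length), p[i] ≤ max (j+i) (M + 2*(j+i) - t)) →
    c ≤ max j (M + 2*j - (t+1)) →
    ∀ i (h : i < q.length), q[i] ≤ max (j+i) (M + 2*(j+i) - (t+1)) := by
  intro c q p hrel
  induction hrel with
  | nil => intro j _ _ i h; simp at h
  | @cons c q p qs ps hq _ ih =>
    intro j hp hc i h
    match i with
    | 0 =>
      have := hp 0 (by simp)
      simp only [List.getElem_cons_zero] at *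
      omega
    | i+1 =>
      have hps : ∀ i (h : i < ps.length), ps[i] ≤ max ((j+1)+i) (M + 2*((j+1)+i) - t) := by
        intro i hi
        have := hp (i+1) (by simpa using hi)
        simp only [List.getElem_cons_succ] at this
        have e : j + (i+1) = (j+1)+i := by omega
        rw [e] at this
        exact this
      have hc' : p + 1 ≤ max (j+1) (M + 2*(j+1) - (t+1)) := by
        have := hp 0 (by simp)
        simp only [List.getElem_cons_zero] at this
        omega
      have := ih hps hc' i (by simpa using h)
      simp only [List.getElem_cons_succ]
      have e : (j+1) + i = j + (i+1) := by omega
      rw [e] at this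
      exact this

lemma rel_length : ∀ {c : ℕ} {q p : List ℕ}, ZRel c q p → q.length = p.length := by
  intro c q p h
  induction h <;> simp [*]


lemma projRun (k : ℕ) : ∀ (r : List ℕ), r ≠ [] → r.Chain' (fun x y => y < x) →
    ∃ a b, r.length = a + b ∧ proj k r = List.replicate a true ++ List.replicate b false ∧
      (a = 0 ↔ ∀ h : r ≠ [], r.head h < k) ∧ (0 < b ↔ ∀ h : r ≠ [], r.getLast h < k) := by
  intro r
  induction r with
  | nil => intro h; exact absurd rfl h
  | cons x r ih =>
    intro _ hch
    match r, hch with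
    | [], _ =>
      by_cases hk : k ≤ x
      · exact ⟨1, 0, rfl, by simp [proj, hk], by simp; omega, by simp; omega⟩
      · exact ⟨0, 1, rfl, by simp [proj]; omega, by simp; omega, by simp; omega⟩
    | y :: r', hch =>
      have hch' := (List.isChain_cons_cons.mp hch)
      obtain ⟨a, b, hlen, hproj, hhead, hlast⟩ := ih (by simp) hch'.2
      have hne : (y :: r') ≠ [] := by simp
      have hlast_eq : ∀ h : (x :: y :: r') ≠ [], (x :: y :: r').getLast h = (y :: r').getLast hne := by
        intro h; exact List.getLast_cons hne
      by_cases hk : k ≤ x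
      · refine ⟨a + 1, b, by simp at hlen ⊢; omega, ?_, by simp; omega, ?_⟩
        · show (decide (k ≤ x)) :: proj k (y :: r') = _
          rw [hproj]
          simp [hk, List.replicate_succ]
        · rw [show (0 < b ↔ ∀ h : (x :: y :: r') ≠ [], (x :: y :: r').getLast h < k) =
              (0 < b ↔ ∀ h : (y :: r') ≠ [], (y :: r').getLast h < k) from ?_]
          · exact hlast
          · congr 1
            refine propext ⟨?_, ?_⟩
            · intro hh h
              have := hh (by simp)
              rwa [hlast_eq] at this
            · intro hh h
              rw [hlast_eq h]; exact hh hne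
      · have hx : x < k := by omega
        have ha : a = 0 := hhead.mpr (fun h => by
          have : y < x := hch'.1
          simp only [List.head_cons]; omega)
        have hb : 0 < b := by
          have : 1 ≤ a + b := by simp at hlen; omega
          omega
        refine ⟨0, b + 1, by simp at hlen ⊢; omega, ?_, by simp [hx], ?_⟩
        · show (decide (k ≤ x)) :: proj k (y :: r') = _
          rw [hproj, ha]
          simp [hk, List.replicate_succ]
        · constructor
          · intro _ h
            rw [hlast_eq h]
            exact (hlast.mp hb) hne
          · intro _; omega

lemma relMain (k : ℕ) : ∀ (L : List (List ℕ)) (s c : ℕ),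
    (∀ r ∈ L, r ≠ []) →
    (∀ r ∈ L, r.Chain' fun x y => y < x) →
    (L.Chain' fun r r' => ∀ (h1 : r ≠ []) (h2 : r' ≠ []), r.getLast h1 ≤ r'.head h2) →
    (∀ (r : List ℕ), L.head? = some r → ∀ (hr : r ≠ []), r.head hr < k → s ≤ max c (s-1)) →
    ZRel c (zp (proj k ((L.map List.reverse).flatten)) s) (zp (proj k L.flatten) s) := by
  intro L
  induction L with
  | nil => intro s c _ _ _ _; exact ZRel.nil c
  | cons r L ih =>
    intro s c hne hch hbd hH
    have hrne : r ≠ [] := hne r (by simp)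
    obtain ⟨a, b, hlen, hproj, hhead, hlast⟩ := projRun k r hrne (hch r (by simp))
    have hbd' := List.isChain_cons.mp hbd
    have hp : zp (proj k (r :: L).flatten) s
        = List.range' (s+a) b ++ zp (proj k L.flatten) (s+a+b) := by
      rw [List.flatten_cons]
      show zp (List.map _ (r ++ L.flatten)) s = _
      rw [List.map_append]
      rw [show (List.map (fun x => decide (k ≤ x)) r) = proj k r from rfl, hproj,
        List.append_assoc, zp_append, zp_append]
      simp only [List.length_replicate, zp_replicate_true, zp_replicate_false,
        List.append_nil, List.nil_append]
      rfl
    have hq : zp (proj k ((r :: L).map List.reverse).flatten) s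
        = List.range' s b ++ zp (proj k (L.map List.reverse).flatten) (s+a+b) := by
      rw [List.map_cons, List.flatten_cons]
      show zp (List.map _ (r.reverse ++ (L.map List.reverse).flatten)) s = _
      rw [List.map_append]
      rw [show (List.map (fun x => decide (k ≤ x)) r.reverse) = proj k r.reverse from rfl]
      rw [show proj k r.reverse = (proj k r).reverse from by simp [proj]]
      rw [hproj, List.reverse_append, List.reverse_replicate, List.reverse_replicate,
        List.append_assoc, zp_append, zp_append]
      simp only [List.length_replicate, zp_replicate_true, zp_replicate_false,
        List.append_nil, List.nil_append]
      rw [show s + b + a = s + a + b from by omega]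
      rfl
    rw [hp, hq]
    match b, hproj, hlen, hlast with
    | 0, hproj, hlen, hlast =>
      simp only [List.range'_zero, List.nil_append]
      apply ih (s+a+0) c (fun r hr => hne r (by simp [hr])) (fun r hr => hch r (by simp [hr]))
        hbd'.2
      intro r2 hr2 hr2ne hr2k
      exfalso
      have hmem : r2 ∈ L.head? := hr2
      have hle := hbd'.1 r2 hmem hrne hr2ne
      have : ∀ h : r ≠ [], r.getLast h < k := fun h => lt_of_le_of_lt hle hr2k
      have := hlast.mpr this
      omega
    | b'+1, hproj, hlen, hlast =>
      apply relBlock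
      · by_cases ha : a = 0
        · subst ha
          have hhd : r.head hrne < k := hhead.mp rfl hrne
          have := hH r rfl hrne hhd
          omega
        · omega
      · apply ih (s+a+b'+1) (s+a+b'+1) (fun r hr => hne r (by simp [hr]))
          (fun r hr => hch r (by simp [hr])) hbd'.2
        intro r2 hr2 hr2ne hr2k
        omega


lemma flatten_map_reverse_perm (L : List (List ℕ)) :
    ((L.map List.reverse).flatten).Perm L.flatten := by
  induction L with
  | nil => rfl
  | cons r L ih => simpa using List.Perm.append (List.reverse_perm r) ih

lemma popStack_perm (w : List ℕ) : (popStack w).Perm w := by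
  have := flatten_map_reverse_perm (w.splitBy (fun a b => decide (b < a)))
  rwa [List.flatten_splitBy] at this

lemma relPop (k : ℕ) (w : List ℕ) :
    ZRel 0 (zp (proj k (popStack w)) 0) (zp (proj k w) 0) := by
  have h1 := List.flatten_splitBy (fun a b => decide (b < a)) w
  have main := relMain k (w.splitBy (fun a b => decide (b < a))) 0 0
    (fun r hr => List.ne_nil_of_mem_splitBy hr)
    (fun r hr => (List.isChain_of_mem_splitBy hr).imp (fun {x y} hb => by simpa using hb))
    ?_ ?_
  · rw [h1] at main; exact main
  · have := List.isChain_getLast_head_splitBy (fun a b => decide (b < a)) w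
    refine this.imp ?_
    intro r r' hrr h1 h2
    obtain ⟨ha, hb, hf⟩ := hrr
    have := of_decide_eq_false hf
    exact Nat.le_of_not_lt this
  · intro r _ hr _
    exact Nat.zero_le _

lemma iter_perm (t : ℕ) (w : List ℕ) : (popStack^[t] w).Perm w := by
  induction t with
  | zero => exact List.Perm.refl _
  | succ t ih => rw [Function.iterate_succ_apply']; exact (popStack_perm _).trans ih

lemma invariant (k : ℕ) (π : List ℕ) (t : ℕ) :
    ∀ i (h : i < (zp (proj k (popStack^[t] π)) 0).length),
      (zp (proj k (popStack^[t] π)) 0)[i] ≤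
        max i (π.length - (proj k π).count false + 2*i - t) := by
  induction t with
  | zero =>
    intro i h
    simp only [Function.iterate_zero, id] at h ⊢
    have hup := zp_upper (proj k π) 0 i h
    have hz : (zp (proj k π) 0).length = (proj k π).count false := zp_length _ _
    have hlen : (proj k π).length = π.length := by simp [proj]
    omega
  | succ t ih =>
    rw [show popStack^[t+1] π = popStack (popStack^[t] π) from
      Function.iterate_succ_apply' _ _ _]
    intro i h
    have hrel := relPop k (popStack^[t] π)
    have hres := indStep (M := π.length - (proj k π).count false) (t := t) hrel (j := 0)
      (fun i h => by simpa using ih i h) (Nat.zero_le _) i h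
    simpa using hres


/-- Every permutation of length `n` is sorted by `n-1` passes through a pop-stack. -/
theorem stmt5 (n : ℕ) (π : List ℕ) (h : π.Perm (List.range' 1 n)) :
    popStack^[n - 1] π = List.range' 1 n := by
  have hlen : π.length = n := by simpa using h.length_eq
  have hupi : (popStack^[n-1] π).Perm π := iter_perm _ _
  have hur : (popStack^[n-1] π).Perm (List.range' 1 n) := hupi.trans h
  have hulen : (popStack^[n-1] π).length = n := by simpa using hur.length_eq
  have hdiag : ∀ k i (hi : i < (zp (proj k (popStack^[n-1] π)) 0).length),
      (zp (proj k (popStack^[n-1] π)) 0)[i] = i := by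
    intro k i hi
    have h1 := invariant k π (n-1) i hi
    have h2 := zp_lower (proj k (popStack^[n-1] π)) 0 i hi
    have h3 : (zp (proj k (popStack^[n-1] π)) 0).length
        = (proj k (popStack^[n-1] π)).count false := zp_length _ _
    have h4 : (proj k (popStack^[n-1] π)).count false = (proj k π).count false :=
      (hupi.map _).count_eq _
    have h5 : (proj k π).count false ≤ (proj k π).length := List.count_le_length
    have h6 : (proj k π).length = n := by simp [proj, hlen]
    omega
  have hplen : ∀ k, (proj k (popStack^[n-1] π)).length = n := by
    intro k; simp [proj, hulen]
  have hmem : ∀ k j (hj : j < n),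
      (proj k (popStack^[n-1] π))[j]'(by rw [hplen]; omega) = false →
      ∀ i (hij : i ≤ j), (proj k (popStack^[n-1] π))[i]'(by rw [hplen]; omega) = false := by
    intro k j hj hjf i hij
    have hjZ : j ∈ zp (proj k (popStack^[n-1] π)) 0 :=
      (zp_mem _ 0 j).mpr ⟨j, by rw [hplen]; omega, by omega, hjf⟩
    obtain ⟨idx, hidx, hidxe⟩ := List.mem_iff_getElem.mp hjZ
    have hidd := hdiag k idx hidx
    have hjlt : j < (zp (proj k (popStack^[n-1] π)) 0).length := by omega
    have hilt : i < (zp (proj k (popStack^[n-1] π)) 0).length := by omega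
    have hiZ : i ∈ zp (proj k (popStack^[n-1] π)) 0 := by
      have := hdiag k i hilt
      exact this ▸ List.getElem_mem hilt
    obtain ⟨i', hi', hieq, hif⟩ := (zp_mem _ 0 i).mp hiZ
    have : i' = i := by omega
    subst this
    exact hif
  have hle : ∀ i j (hij : i < j) (hj : j < n),
      (popStack^[n-1] π)[i]'(by rw [hulen]; omega) ≤ (popStack^[n-1] π)[j]'(by rw [hulen]; omega) := by
    intro i j hij hj
    by_contra hcon
    push_neg at hcon
    have hjf : (proj ((popStack^[n-1] π)[i]'(by rw [hulen]; omega)) (popStack^[n-1] π))[j]'(by rw [hplen]; omega) = false := by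
      simp only [proj, List.getElem_map]
      simp only [decide_eq_false_iff_not]
      omega
    have hif := hmem _ j hj hjf i (by omega)
    simp only [proj, List.getElem_map, decide_eq_false_iff_not] at hif
    omega
  haveI : IsAntisymm ℕ (· < ·) := ⟨fun a b h1 h2 => by omega⟩
  have hnd : (popStack^[n-1] π).Nodup := hur.nodup_iff.mpr (List.nodup_range' (s := 1) (n := n))
  have hsort : (popStack^[n-1] π).Pairwise (· < ·) := by
    rw [List.pairwise_iff_getElem]
    intro i j hi hj hij
    have h1 := hle i j hij (by omega)
    have h2 : (popStack^[n-1] π)[i] ≠ (popStack^[n-1] π)[j] := by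
      intro he
      have := (hnd.getElem_inj_iff (hi := by omega) (hj := by omega)).mp he
      omega
    omega
  have hsort2 : (List.range' 1 n).Pairwise (· < ·) := by
    rw [List.pairwise_iff_getElem]
    intro i j hi hj hij
    simp only [List.getElem_range']
    omega
  exact List.Perm.eq_of_pairwise (fun a b _ _ h1 h2 => by omega) hsort hsort2 hur
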